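/- Let (𝔰_j)_{j=−1}^ℓ be a real sequence with 𝔰_{−1} ≠ 0, set l = 1/𝔰_{−1} and n = ⌊ℓ/2⌋, and let (s_j)_{j=0}^ℓ be the unique reals satisfying the Toeplitz matrix equation T(𝔰_{−1}, …, 𝔰_ℓ) · T(l, −s_0, …, −s_ℓ) = I_{ℓ+2}. Set S_p^+ = (s_{i+j+1})_{i,j=0}^{p−1} and 𝒮_p^− = (𝔰_{i+j−1})_{i,j=0}^{p−1}. Then for p = 1, …, n: ν_0(S_p^+) = ν_0(𝒮_{p+1}^−); ν_−(S_p^+) = ν_−(𝒮_{p+1}^−) if 𝔰_{−1} > 0; and ν_−(S_p^+) = ν_−(𝒮_{p+1}^−) − 1 if 𝔰_{−1} < 0. -/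

import Mathlib

open Filter Polynomial Matrix Complex Finset

noncomputable section

/-- Upper triangular Toeplitz matrix `T(c_0,…,c_{n-1})`. -/
def toeplitzU {n : ℕ} (c : Fin n → ℝ) : Matrix (Fin n) (Fin n) ℝ :=
  Matrix.of fun i j =>
    if (i : ℕ) ≤ (j : ℕ) then c ⟨(j : ℕ) - (i : ℕ), lt_of_le_of_lt (Nat.sub_le _ _) j.isLt⟩
    else 0

/-- Hankel matrix `S_n = (s_{i+j})_{i,j=0}^{n-1}`. -/
def hankelM (s : ℕ → ℝ) (n : ℕ) : Matrix (Fin n) (Fin n) ℝ :=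
  Matrix.of fun i j => s ((i : ℕ) + (j : ℕ))

/-- Shifted Hankel matrix `S_n^+ = (s_{i+j+1})_{i,j=0}^{n-1}`. -/
def hankelMp (s : ℕ → ℝ) (n : ℕ) : Matrix (Fin n) (Fin n) ℝ :=
  Matrix.of fun i j => s ((i : ℕ) + (j : ℕ) + 1)

/-- Number of negative eigenvalues (with multiplicity), as roots of the char. polynomial. -/
def nuNeg {n : ℕ} (A : Matrix (Fin n) (Fin n) ℝ) : ℕ :=
  Multiset.card (A.charpoly.roots.filter (fun x => x < 0))

def nuZero {n : ℕ} (A : Matrix (Fin n) (Fin n) ℝ) : ℕ :=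
  Multiset.card (A.charpoly.roots.filter (fun x => x = 0))

namespace IndexAux

variable {N : ℕ}

lemma charpoly_conj (U V M : Matrix (Fin N) (Fin N) ℝ) (h1 : U * V = 1) :
    (U * M * V).charpoly = M.charpoly := by
  have key : charmatrix (U * M * V) =
      (C : ℝ →+* ℝ[X]).mapMatrix U * charmatrix M * (C : ℝ →+* ℝ[X]).mapMatrix V := by
    unfold charmatrix
    rw [mul_sub, sub_mul]
    congr 1
    · symm
      rw [mul_assoc, ((Matrix.scalar_commute (X : ℝ[X]) (fun r' => Commute.all _ _)
        ((C : ℝ →+* ℝ[X]).mapMatrix V)).eq), ← mul_assoc, ← _root_.map_mul, h1,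
        _root_.map_one, one_mul]
    · rw [← _root_.map_mul, ← _root_.map_mul]
  have hUV : (C : ℝ →+* ℝ[X]).mapMatrix U * (C : ℝ →+* ℝ[X]).mapMatrix V = 1 := by
    rw [← _root_.map_mul, h1, _root_.map_one]
  have hdet : ((C : ℝ →+* ℝ[X]).mapMatrix U).det * ((C : ℝ →+* ℝ[X]).mapMatrix V).det = 1 := by
    rw [← Matrix.det_mul, hUV, Matrix.det_one]
  unfold Matrix.charpoly
  rw [key, Matrix.det_mul, Matrix.det_mul]
  linear_combination (M.charmatrix.det) * hdet

lemma charpoly_diagonal (d : Fin N → ℝ) :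
    (Matrix.diagonal d).charpoly = ∏ i, (X - C (d i)) := by
  have : charmatrix (Matrix.diagonal d) = Matrix.diagonal (fun i => X - C (d i)) := by
    ext i j
    by_cases h : i = j
    · subst h; simp
    · simp [h, Matrix.diagonal_apply_ne _ h]
  rw [Matrix.charpoly, this, det_diagonal]

lemma charpoly_of_isHermitian (A : Matrix (Fin N) (Fin N) ℝ) (hA : A.IsHermitian) :
    A.charpoly = ∏ i, (X - C (hA.eigenvalues i)) := by
  have hU : (hA.eigenvectorUnitary : Matrix (Fin N) (Fin N) ℝ) *
      (star hA.eigenvectorUnitary : Matrix (Fin N) (Fin N) ℝ) = 1 :=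
    (Matrix.mem_unitaryGroup_iff).mp hA.eigenvectorUnitary.2
  have hsp := hA.spectral_theorem
  rw [RCLike.ofReal_real_eq_id, Function.id_comp, Unitary.conjStarAlgAut_apply] at hsp
  calc A.charpoly = ((hA.eigenvectorUnitary : Matrix (Fin N) (Fin N) ℝ) *
        Matrix.diagonal hA.eigenvalues *
        (star hA.eigenvectorUnitary : Matrix (Fin N) (Fin N) ℝ)).charpoly := by
        rw [← hsp]
    _ = (Matrix.diagonal hA.eigenvalues).charpoly := charpoly_conj _ _ _ hU
    _ = ∏ i, (X - C (hA.eigenvalues i)) := charpoly_diagonal _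

lemma roots_charpoly (A : Matrix (Fin N) (Fin N) ℝ) (hA : A.IsHermitian) :
    A.charpoly.roots = Finset.univ.val.map hA.eigenvalues := by
  rw [charpoly_of_isHermitian A hA]
  have : (∏ i, (X - C (hA.eigenvalues i))) =
      ((Finset.univ.val.map hA.eigenvalues).map fun a => X - C a).prod := by
    rw [Multiset.map_map]; rfl
  rw [this, roots_multiset_prod_X_sub_C]

lemma nuNeg_eq_card (A : Matrix (Fin N) (Fin N) ℝ) (hA : A.IsHermitian) :
    nuNeg A = (Finset.univ.filter fun i => hA.eigenvalues i < 0).card := by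
  classical
  rw [nuNeg, roots_charpoly A hA, Multiset.filter_map, Multiset.card_map]
  rfl

lemma nuZero_eq_card (A : Matrix (Fin N) (Fin N) ℝ) (hA : A.IsHermitian) :
    nuZero A = (Finset.univ.filter fun i => hA.eigenvalues i = 0).card := by
  rw [nuZero, roots_charpoly A hA, Multiset.filter_map, Multiset.card_map]
  rfl


section Herm

variable (A : Matrix (Fin N) (Fin N) ℝ) (hA : A.IsHermitian)

lemma star_eq_transpose (M : Matrix (Fin N) (Fin N) ℝ) : star M = Mᵀ := by
  ext i j
  simp [Matrix.star_eq_conjTranspose, Matrix.conjTranspose_apply]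

lemma hUUl : star (hA.eigenvectorUnitary : Matrix (Fin N) (Fin N) ℝ) *
    (hA.eigenvectorUnitary : Matrix (Fin N) (Fin N) ℝ) = 1 :=
  (Matrix.mem_unitaryGroup_iff').mp hA.eigenvectorUnitary.2

lemma U_inj : Function.Injective
    ((hA.eigenvectorUnitary : Matrix (Fin N) (Fin N) ℝ).mulVecLin) := by
  intro x y hxy
  simp only [Matrix.mulVecLin_apply] at hxy
  have h := congrArg (fun z => star (hA.eigenvectorUnitary : Matrix (Fin N) (Fin N) ℝ) *ᵥ z) hxy
  simpa [Matrix.mulVec_mulVec, hUUl A hA] using h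

lemma dot_U (c d : Fin N → ℝ) :
    ((hA.eigenvectorUnitary : Matrix (Fin N) (Fin N) ℝ) *ᵥ c) ⬝ᵥ
      ((hA.eigenvectorUnitary : Matrix (Fin N) (Fin N) ℝ) *ᵥ d) = c ⬝ᵥ d := by
  set U := (hA.eigenvectorUnitary : Matrix (Fin N) (Fin N) ℝ)
  have h1 : (U *ᵥ c) ᵥ* U = c := by
    have h2 : (U *ᵥ c) ᵥ* (Uᵀ)ᵀ = Uᵀ *ᵥ (U *ᵥ c) := Matrix.vecMul_transpose _ _
    rw [Matrix.transpose_transpose] at h2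
    rw [h2, Matrix.mulVec_mulVec, ← star_eq_transpose, hUUl A hA, Matrix.one_mulVec]
  rw [Matrix.dotProduct_mulVec, h1]

lemma quadU (c : Fin N → ℝ) :
    ((hA.eigenvectorUnitary : Matrix (Fin N) (Fin N) ℝ) *ᵥ c) ⬝ᵥ
      (A *ᵥ ((hA.eigenvectorUnitary : Matrix (Fin N) (Fin N) ℝ) *ᵥ c)) =
      ∑ i, hA.eigenvalues i * c i ^ 2 := by
  set U := (hA.eigenvectorUnitary : Matrix (Fin N) (Fin N) ℝ) with hU
  have hsp := hA.spectral_theorem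
  rw [RCLike.ofReal_real_eq_id, Function.id_comp, Unitary.conjStarAlgAut_apply] at hsp
  have hAU : A * U = U * Matrix.diagonal hA.eigenvalues := by
    conv_lhs => rw [hsp]
    rw [mul_assoc, hUUl A hA, mul_one]
  have h2 : A *ᵥ (U *ᵥ c) = U *ᵥ (Matrix.diagonal hA.eigenvalues *ᵥ c) := by
    rw [Matrix.mulVec_mulVec, Matrix.mulVec_mulVec, hAU]
  rw [h2, dot_U A hA]
  simp only [dotProduct, Matrix.mulVec_diagonal]
  exact Finset.sum_congr rfl fun i _ => by ring

/-- Span of the eigenvectors whose eigenvalue satisfies `Pp`. -/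
def eigSub (Pp : Fin N → Prop) [DecidablePred Pp] : Submodule ℝ (Fin N → ℝ) :=
  Submodule.span ℝ (Set.range fun i : {i // Pp i} =>
    (hA.eigenvectorUnitary : Matrix (Fin N) (Fin N) ℝ) *ᵥ Pi.single (i : Fin N) 1)

lemma finrank_eigSub (Pp : Fin N → Prop) [DecidablePred Pp] :
    Module.finrank ℝ (eigSub A hA Pp) = Fintype.card {i // Pp i} := by
  apply finrank_span_eq_card
  have hli : LinearIndependent ℝ (fun i : Fin N =>
      (hA.eigenvectorUnitary : Matrix (Fin N) (Fin N) ℝ) *ᵥ Pi.single i 1) := by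
    have hb := (Pi.basisFun ℝ (Fin N)).linearIndependent
    have hm := hb.map' _ (LinearMap.ker_eq_bot.mpr (U_inj A hA))
    convert hm using 1
    funext i
    simp [Matrix.mulVecLin_apply]
    all_goals rfl
  exact hli.comp Subtype.val Subtype.val_injective

lemma mem_eigSub (Pp : Fin N → Prop) [DecidablePred Pp] {x : Fin N → ℝ}
    (hx : x ∈ eigSub A hA Pp) :
    ∃ c : Fin N → ℝ, (∀ i, ¬ Pp i → c i = 0) ∧
      x = (hA.eigenvectorUnitary : Matrix (Fin N) (Fin N) ℝ) *ᵥ c := by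
  set U := (hA.eigenvectorUnitary : Matrix (Fin N) (Fin N) ℝ)
  rw [eigSub, Finsupp.mem_span_range_iff_exists_finsupp] at hx
  obtain ⟨c, hc⟩ := hx
  refine ⟨∑ i ∈ c.support, c i • (Pi.single (i : Fin N) 1 : Fin N → ℝ), ?_, ?_⟩
  · intro j hj
    rw [Finset.sum_apply]
    apply Finset.sum_eq_zero
    intro i _
    have hij : (i : Fin N) ≠ j := fun h => hj (h ▸ i.2)
    simp [Pi.single_apply, hij]
  · rw [← hc, Finsupp.sum]
    have : ∀ i ∈ c.support, c i • (U *ᵥ Pi.single (i : Fin N) 1)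
        = U.mulVecLin (c i • (Pi.single (i : Fin N) 1 : Fin N → ℝ)) := by
      intro i _
      rw [_root_.map_smul, Matrix.mulVecLin_apply]
    rw [Finset.sum_congr rfl this, ← map_sum, Matrix.mulVecLin_apply]

lemma quad_neg_on (x : Fin N → ℝ)
    (hx : x ∈ eigSub A hA (fun i => hA.eigenvalues i < 0)) (hx0 : x ≠ 0) :
    x ⬝ᵥ A *ᵥ x < 0 := by
  classical
  obtain ⟨c, hc0, rfl⟩ := mem_eigSub A hA _ hx
  rw [quadU A hA]
  have hcne : c ≠ 0 := by
    rintro rfl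
    simp [Matrix.mulVec_zero] at hx0
  obtain ⟨i0, hi0⟩ : ∃ i, c i ≠ 0 := Function.ne_iff.mp hcne
  have hPi0 : hA.eigenvalues i0 < 0 := by
    by_contra h
    exact hi0 (hc0 i0 h)
  have hle : ∀ i ∈ Finset.univ, hA.eigenvalues i * c i ^ 2 ≤ (0 : ℝ) := by
    intro i _
    by_cases h : hA.eigenvalues i < 0
    · nlinarith [sq_nonneg (c i)]
    · rw [hc0 i h]
      simp
  have hstrict : ∃ i ∈ (Finset.univ : Finset (Fin N)), hA.eigenvalues i * c i ^ 2 < (0 : ℝ) := by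
    refine ⟨i0, Finset.mem_univ _, ?_⟩
    have : 0 < c i0 ^ 2 := by positivity
    nlinarith
  obtain ⟨i1, hi1, hi1lt⟩ := hstrict
  calc ∑ i, hA.eigenvalues i * c i ^ 2
      < ∑ i : Fin N, (0 : ℝ) := Finset.sum_lt_sum hle ⟨i1, hi1, hi1lt⟩
    _ = 0 := by simp

lemma quad_nonneg_on (x : Fin N → ℝ)
    (hx : x ∈ eigSub A hA (fun i => ¬ hA.eigenvalues i < 0)) :
    0 ≤ x ⬝ᵥ A *ᵥ x := by
  classical
  obtain ⟨c, hc0, rfl⟩ := mem_eigSub A hA _ hx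
  rw [quadU A hA]
  apply Finset.sum_nonneg
  intro i _
  by_cases h : hA.eigenvalues i < 0
  · rw [hc0 i (by simpa using h)]
    simp
  · nlinarith [sq_nonneg (c i)]

lemma finrank_le_negCount (W : Submodule ℝ (Fin N → ℝ))
    (hW : ∀ x ∈ W, x ≠ 0 → x ⬝ᵥ A *ᵥ x < 0) :
    Module.finrank ℝ W ≤ (Finset.univ.filter fun i => hA.eigenvalues i < 0).card := by
  classical
  by_contra hlt
  push_neg at hlt
  set Z := eigSub A hA (fun i => ¬ hA.eigenvalues i < 0) with hZdef
  have hcards := Finset.card_filter_add_card_filter_not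
      (s := (Finset.univ : Finset (Fin N))) (p := fun i => hA.eigenvalues i < 0)
  have hZrank : Module.finrank ℝ Z
      = (Finset.univ.filter fun i => ¬ hA.eigenvalues i < 0).card := by
    rw [hZdef, finrank_eigSub, Fintype.card_subtype]
  have hsum := Submodule.finrank_sup_add_finrank_inf_eq W Z
  have hle : Module.finrank ℝ ↥(W ⊔ Z) ≤ N := by
    have h1 := Submodule.finrank_le (W ⊔ Z)
    simpa using h1
  have hpos : 0 < Module.finrank ℝ ↥(W ⊓ Z) := by
    simp only [Finset.card_univ, Fintype.card_fin] at hcards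
    omega
  obtain ⟨x, hx0⟩ := Module.finrank_pos_iff_exists_ne_zero.mp hpos
  have hxW : (x : Fin N → ℝ) ∈ W := (Submodule.mem_inf.mp x.2).1
  have hxZ : (x : Fin N → ℝ) ∈ Z := (Submodule.mem_inf.mp x.2).2
  have hxne : (x : Fin N → ℝ) ≠ 0 := fun h => hx0 (Subtype.ext h)
  exact absurd (quad_nonneg_on A hA _ hxZ) (not_le.mpr (hW _ hxW hxne))

lemma exists_negdef_subspace :
    ∃ W : Submodule ℝ (Fin N → ℝ),
      Module.finrank ℝ W = (Finset.univ.filter fun i => hA.eigenvalues i < 0).card ∧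
      ∀ x ∈ W, x ≠ 0 → x ⬝ᵥ A *ᵥ x < 0 := by
  classical
  refine ⟨eigSub A hA (fun i => hA.eigenvalues i < 0), ?_, quad_neg_on A hA⟩
  rw [finrank_eigSub, Fintype.card_subtype]

end Herm

section Sylvester

lemma conjT_eq_transpose (M : Matrix (Fin N) (Fin N) ℝ) : Mᴴ = Mᵀ := by
  ext i j
  simp [Matrix.conjTranspose_apply]

lemma isHermitian_conj (A P : Matrix (Fin N) (Fin N) ℝ) (hA : A.IsHermitian) :
    (Pᵀ * A * P).IsHermitian := by
  have hAT : Aᵀ = A := by rw [← conjT_eq_transpose, hA]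
  unfold Matrix.IsHermitian
  rw [conjT_eq_transpose, Matrix.transpose_mul, Matrix.transpose_mul,
    Matrix.transpose_transpose, hAT, mul_assoc]

lemma negCount_le_of_congr (A P : Matrix (Fin N) (Fin N) ℝ) (hA : A.IsHermitian)
    (hP : IsUnit P.det) :
    (Finset.univ.filter fun i => (isHermitian_conj A P hA).eigenvalues i < 0).card ≤
      (Finset.univ.filter fun i => hA.eigenvalues i < 0).card := by
  classical
  set B := Pᵀ * A * P with hBdef
  have hB : B.IsHermitian := isHermitian_conj A P hA
  obtain ⟨W, hWrank, hWneg⟩ := exists_negdef_subspace B hB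
  have hPinj : Function.Injective P.mulVecLin := by
    intro x y hxy
    simp only [Matrix.mulVecLin_apply] at hxy
    have h := congrArg (fun z => P⁻¹ *ᵥ z) hxy
    simpa [Matrix.mulVec_mulVec, Matrix.nonsing_inv_mul P hP] using h
  set W' := W.map P.mulVecLin with hW'def
  have hW'rank : Module.finrank ℝ W' = Module.finrank ℝ W :=
    (LinearEquiv.finrank_eq (Submodule.equivMapOfInjective P.mulVecLin hPinj W)).symm
  have hW'neg : ∀ x ∈ W', x ≠ 0 → x ⬝ᵥ A *ᵥ x < 0 := by
    rintro x hx hx0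
    obtain ⟨y, hy, rfl⟩ := Submodule.mem_map.mp hx
    rw [Matrix.mulVecLin_apply] at hx0 ⊢
    have hy0 : y ≠ 0 := by
      rintro rfl
      simp [Matrix.mulVec_zero] at hx0
    have key : (P *ᵥ y) ⬝ᵥ A *ᵥ (P *ᵥ y) = y ⬝ᵥ B *ᵥ y := by
      rw [hBdef, ← Matrix.mulVec_mulVec, ← Matrix.mulVec_mulVec]
      rw [Matrix.dotProduct_mulVec y, Matrix.vecMul_transpose]
    rw [key]
    exact hWneg y hy hy0
  calc (Finset.univ.filter fun i => hB.eigenvalues i < 0).card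
      = Module.finrank ℝ W' := by rw [hW'rank, hWrank]
    _ ≤ _ := finrank_le_negCount A hA W' hW'neg

lemma nuNeg_le_of_congr (A P : Matrix (Fin N) (Fin N) ℝ) (hA : A.IsHermitian)
    (hP : IsUnit P.det) :
    nuNeg (Pᵀ * A * P) ≤ nuNeg A := by
  rw [nuNeg_eq_card A hA, nuNeg_eq_card _ (isHermitian_conj A P hA)]
  exact negCount_le_of_congr A P hA hP

lemma nuNeg_conj (A P : Matrix (Fin N) (Fin N) ℝ) (hA : A.IsHermitian)
    (hP : IsUnit P.det) :
    nuNeg (Pᵀ * A * P) = nuNeg A := by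
  classical
  have hB : (Pᵀ * A * P).IsHermitian := isHermitian_conj A P hA
  refine le_antisymm (nuNeg_le_of_congr A P hA hP) ?_
  have hPinvdet : IsUnit P⁻¹.det := by
    rw [Matrix.det_nonsing_inv]
    exact isUnit_ringInverse.mpr hP
  have hback : (P⁻¹)ᵀ * (Pᵀ * A * P) * P⁻¹ = A := by
    have h1 : P * P⁻¹ = 1 := Matrix.mul_nonsing_inv P hP
    have h2 : (P⁻¹)ᵀ * Pᵀ = 1 := by
      rw [← Matrix.transpose_mul, h1, Matrix.transpose_one]
    calc (P⁻¹)ᵀ * (Pᵀ * A * P) * P⁻¹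
        = ((P⁻¹)ᵀ * Pᵀ) * A * (P * P⁻¹) := by
          simp only [mul_assoc]
      _ = A := by rw [h1, h2, one_mul, mul_one]
  have hle := nuNeg_le_of_congr (Pᵀ * A * P) P⁻¹ hB hPinvdet
  rwa [hback] at hle

lemma nuZero_conj (A P : Matrix (Fin N) (Fin N) ℝ) (hA : A.IsHermitian)
    (hP : IsUnit P.det) :
    nuZero (Pᵀ * A * P) = nuZero A := by
  classical
  have hB : (Pᵀ * A * P).IsHermitian := isHermitian_conj A P hA
  have hrank : (Pᵀ * A * P).rank = A.rank := by
    rw [Matrix.rank_mul_eq_left_of_isUnit_det P (Pᵀ * A) hP,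
      Matrix.rank_mul_eq_right_of_isUnit_det Pᵀ A (by rwa [Matrix.det_transpose])]
  have key : ∀ (M : Matrix (Fin N) (Fin N) ℝ) (hM : M.IsHermitian),
      nuZero M + M.rank = N := by
    intro M hM
    rw [nuZero_eq_card M hM, hM.rank_eq_card_non_zero_eigs, Fintype.card_subtype]
    have := Finset.card_filter_add_card_filter_not
      (s := (Finset.univ : Finset (Fin N))) (p := fun i => hM.eigenvalues i = 0)
    simp only [Finset.card_univ, Fintype.card_fin] at this
    simp only [ne_eq] at *
    omega
  have h1 := key _ hB
  have h2 := key A hA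
  omega

end Sylvester

section Conv

lemma range_filter_le (n a : ℕ) (ha : a ≤ n) :
    Finset.range (a+1) = (Finset.range (n+1)).filter (· ≤ a) := by
  ext x
  simp only [Finset.mem_range, Finset.mem_filter, Nat.lt_succ_iff]
  omega

lemma sum_triangle_swap (n : ℕ) (F : ℕ → ℕ → ℝ) :
    ∑ i ∈ Finset.range (n+1), ∑ t ∈ Finset.range (i+1), F i t
      = ∑ t ∈ Finset.range (n+1), ∑ u ∈ Finset.range ((n-t)+1), F (t+u) t := by
  have h1 : ∀ i ∈ Finset.range (n+1), ∑ t ∈ Finset.range (i+1), F i t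
      = ∑ t ∈ Finset.range (n+1), if t ≤ i then F i t else 0 := by
    intro i hi
    simp only [Finset.mem_range, Nat.lt_succ_iff] at hi
    rw [range_filter_le n i hi, Finset.sum_filter]
  rw [Finset.sum_congr rfl h1, Finset.sum_comm]
  apply Finset.sum_congr rfl
  intro t ht
  simp only [Finset.mem_range, Nat.lt_succ_iff] at ht
  have h2 : n + 1 = t + (n - t + 1) := by omega
  rw [h2, Finset.sum_range_add]
  have h3 : ∑ i ∈ Finset.range t, (if t ≤ i then F i t else 0) = 0 := by
    apply Finset.sum_eq_zero
    intro i hi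
    simp only [Finset.mem_range] at hi
    rw [if_neg (by omega)]
  rw [h3, zero_add]
  apply Finset.sum_congr rfl
  intro u _
  rw [if_pos (Nat.le_add_right _ _)]

variable {f g : ℕ → ℝ}

lemma conv_comm (M2 : ℕ)
    (hconv : ∀ m, m ≤ M2 → ∑ k ∈ Finset.range (m+1), f k * g (m-k) = if m = 0 then 1 else 0) :
    ∀ m, m ≤ M2 → ∑ t ∈ Finset.range (m+1), f (m-t) * g t = if m = 0 then 1 else 0 := by
  intro m hm
  calc ∑ t ∈ Finset.range (m+1), f (m-t) * g t
      = ∑ t ∈ Finset.range (m+1), f (m+1-1-t) * g (m - (m+1-1-t)) := by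
        apply Finset.sum_congr rfl
        intro t ht
        simp only [Finset.mem_range, Nat.lt_succ_iff] at ht
        congr 2 <;> omega
    _ = ∑ k ∈ Finset.range (m+1), f k * g (m - k) :=
        Finset.sum_range_reflect (fun k => f k * g (m-k)) (m+1)
    _ = if m = 0 then 1 else 0 := hconv m hm

lemma Dprime (M2 : ℕ)
    (hconv : ∀ m, m ≤ M2 → ∑ k ∈ Finset.range (m+1), f k * g (m-k) = if m = 0 then 1 else 0)
    (a b : ℕ) (hab : a + b ≤ M2) :
    ∑ i ∈ Finset.range (a+1), ∑ j ∈ Finset.range (b+1), f (a-i) * f (b-j) * g (i+j)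
      = (if b = 0 then f a else 0) + (if a = 0 then f b else 0) - f (a+b) := by
  have hconv' := conv_comm M2 hconv
  -- step A : inner sums
  have stepA : ∀ i, i ≤ a → ∑ j ∈ Finset.range (b+1), f (b-j) * g (i+j)
      = (if i + b = 0 then 1 else 0) - ∑ t ∈ Finset.range i, f (b+i-t) * g t := by
    intro i hi
    have h1 := hconv' (i+b) (by omega)
    rw [show i+b+1 = i + (b+1) by omega, Finset.sum_range_add] at h1
    have h2 : ∑ j ∈ Finset.range (b+1), f (i+b-(i+j)) * g (i+j)
        = ∑ j ∈ Finset.range (b+1), f (b-j) * g (i+j) := by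
      apply Finset.sum_congr rfl
      intro j hj
      simp only [Finset.mem_range, Nat.lt_succ_iff] at hj
      congr 2
      omega
    rw [h2] at h1
    have h3 : ∑ t ∈ Finset.range i, f (i+b-t) * g t
        = ∑ t ∈ Finset.range i, f (b+i-t) * g t := by
      apply Finset.sum_congr rfl
      intro t ht
      simp only [Finset.mem_range] at ht
      congr 2
      omega
    rw [h3] at h1
    rw [show (if i+b = 0 then (1:ℝ) else 0) = (if i+b = 0 then (1:ℝ) else 0) from rfl]
    linarith [h1]
  have hmain : ∀ i ∈ Finset.range (a+1),
      ∑ j ∈ Finset.range (b+1), f (a-i) * f (b-j) * g (i+j)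
        = f (a-i) * (if i + b = 0 then 1 else 0)
          - f (a-i) * ∑ t ∈ Finset.range i, f (b+i-t) * g t := by
    intro i hi
    simp only [Finset.mem_range, Nat.lt_succ_iff] at hi
    rw [← mul_sub, ← stepA i hi, Finset.mul_sum]
    apply Finset.sum_congr rfl
    intro j _
    ring
  rw [Finset.sum_congr rfl hmain, Finset.sum_sub_distrib]
  -- first piece
  have hterm1 : ∑ i ∈ Finset.range (a+1), f (a-i) * (if i + b = 0 then 1 else 0)
      = if b = 0 then f a else 0 := by
    have hcg : ∀ i ∈ Finset.range (a+1), f (a-i) * (if i + b = 0 then 1 else 0)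
        = if i = 0 then (if b = 0 then f a else 0) else 0 := by
      intro i _
      by_cases h : i + b = 0
      · have hi0 : i = 0 := by omega
        have hb0 : b = 0 := by omega
        simp [h, hi0, hb0]
      · rw [if_neg h, mul_zero]
        by_cases hi0 : i = 0
        · have hb0 : ¬ b = 0 := by omega
          simp [hi0, hb0]
        · simp [hi0]
    rw [Finset.sum_congr rfl hcg, Finset.sum_ite_eq' (Finset.range (a+1)) 0]
    simp
  -- second piece
  have hW : ∑ i ∈ Finset.range (a+1), ∑ t ∈ Finset.range (i+1), f (a-i) * (f (b+i-t) * g t)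
      = f (a+b) := by
    have hrefl : ∀ i ∈ Finset.range (a+1),
        ∑ t ∈ Finset.range (i+1), f (a-i) * (f (b+i-t) * g t)
          = ∑ k ∈ Finset.range (i+1), f (a-i) * (f (b+k) * g (i-k)) := by
      intro i _
      rw [← Finset.sum_range_reflect (fun k => f (a-i) * (f (b+k) * g (i-k))) (i+1)]
      apply Finset.sum_congr rfl
      intro t ht
      simp only [Finset.mem_range, Nat.lt_succ_iff] at ht
      congr 2
      · congr 1; omega
      · congr 1; omega
    rw [Finset.sum_congr rfl hrefl, sum_triangle_swap]
    have hinner : ∀ k ∈ Finset.range (a+1),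
        ∑ u ∈ Finset.range ((a-k)+1), f (a-(k+u)) * (f (b+k) * g ((k+u)-k))
          = f (b+k) * (if a - k = 0 then 1 else 0) := by
      intro k hk
      simp only [Finset.mem_range, Nat.lt_succ_iff] at hk
      rw [← hconv' (a-k) (by omega), Finset.mul_sum]
      apply Finset.sum_congr rfl
      intro u hu
      simp only [Finset.mem_range, Nat.lt_succ_iff] at hu
      have e1 : a - (k+u) = (a-k) - u := by omega
      have e2 : k + u - k = u := by omega
      rw [e1, e2]
      ring
    rw [Finset.sum_congr rfl hinner]
    have hlast : ∀ k ∈ Finset.range (a+1), f (b+k) * (if a - k = 0 then 1 else 0)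
        = if k = a then f (b+k) else 0 := by
      intro k hk
      simp only [Finset.mem_range, Nat.lt_succ_iff] at hk
      by_cases h : k = a
      · subst h
        simp
      · rw [if_neg (by omega), if_neg h, mul_zero]
    rw [Finset.sum_congr rfl hlast, Finset.sum_ite_eq' (Finset.range (a+1)) a]
    rw [if_pos (by simp)]
    congr 1
    omega
  have hsplit : ∀ i ∈ Finset.range (a+1),
      f (a-i) * ∑ t ∈ Finset.range i, f (b+i-t) * g t
        = (∑ t ∈ Finset.range (i+1), f (a-i) * (f (b+i-t) * g t)) - f (a-i) * (f b * g i) := by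
    intro i _
    rw [Finset.sum_range_succ, Finset.mul_sum]
    have e : b + i - i = b := by omega
    rw [e]
    ring
  rw [Finset.sum_congr rfl hsplit, Finset.sum_sub_distrib, hW]
  have hcorr : ∑ i ∈ Finset.range (a+1), f (a-i) * (f b * g i)
      = f b * (if a = 0 then 1 else 0) := by
    rw [← hconv' a (by omega), Finset.mul_sum]
    apply Finset.sum_congr rfl
    intro i _
    ring
  rw [hcorr, hterm1]
  by_cases ha : a = 0 <;> by_cases hb : b = 0 <;> simp [ha, hb] <;> ring

lemma star_identity (M2 : ℕ)
    (hconv : ∀ m, m ≤ M2 → ∑ k ∈ Finset.range (m+1), f k * g (m-k) = if m = 0 then 1 else 0)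
    (a b : ℕ) (hab : a + b ≤ M2) :
    ∑ j ∈ Finset.range (b+1), (∑ i ∈ Finset.range (a+1),
        f (a-i) * (-(g (i+j)) + (if i = 0 then g j else 0) + (if j = 0 then g i else 0)))
          * f (b-j)
      = f (a+b) := by
  have hconv' := conv_comm M2 hconv
  have key : ∀ j ∈ Finset.range (b+1),
      (∑ i ∈ Finset.range (a+1),
        f (a-i) * (-(g (i+j)) + (if i = 0 then g j else 0) + (if j = 0 then g i else 0)))
          * f (b-j)
      = ∑ i ∈ Finset.range (a+1),
          (-(f (a-i) * f (b-j) * g (i+j))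
            + (if i = 0 then f a * (f (b-j) * g j) else 0)
            + (if j = 0 then f b * (f (a-i) * g i) else 0)) := by
    intro j hj
    simp only [Finset.mem_range, Nat.lt_succ_iff] at hj
    rw [Finset.sum_mul]
    apply Finset.sum_congr rfl
    intro i hi
    simp only [Finset.mem_range, Nat.lt_succ_iff] at hi
    by_cases hi0 : i = 0 <;> by_cases hj0 : j = 0 <;>
      simp only [hi0, hj0, if_pos, if_neg, Nat.sub_zero, ite_true, ite_false,
        if_false, if_true] <;> ring_nf <;> simp [hi0, hj0] <;> ring
  rw [Finset.sum_congr rfl key]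
  simp only [Finset.sum_add_distrib]
  have hT1 : ∑ j ∈ Finset.range (b+1), ∑ i ∈ Finset.range (a+1),
      -(f (a-i) * f (b-j) * g (i+j))
      = -((if b = 0 then f a else 0) + (if a = 0 then f b else 0) - f (a+b)) := by
    rw [← Dprime M2 hconv a b hab, Finset.sum_comm, ← Finset.sum_neg_distrib]
    apply Finset.sum_congr rfl
    intro i _
    rw [← Finset.sum_neg_distrib]
  have hT2 : ∑ j ∈ Finset.range (b+1), ∑ i ∈ Finset.range (a+1),
      (if i = 0 then f a * (f (b-j) * g j) else 0)
      = f a * (if b = 0 then 1 else 0) := by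
    have h1 : ∀ j ∈ Finset.range (b+1), ∑ i ∈ Finset.range (a+1),
        (if i = 0 then f a * (f (b-j) * g j) else 0) = f a * (f (b-j) * g j) := by
      intro j _
      rw [Finset.sum_ite_eq' (Finset.range (a+1)) 0]
      simp
    rw [Finset.sum_congr rfl h1, ← Finset.mul_sum, ← hconv' b (by omega)]
  have hT3 : ∑ j ∈ Finset.range (b+1), ∑ i ∈ Finset.range (a+1),
      (if j = 0 then f b * (f (a-i) * g i) else 0)
      = f b * (if a = 0 then 1 else 0) := by
    have h1 : ∀ j ∈ Finset.range (b+1), ∑ i ∈ Finset.range (a+1),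
        (if j = 0 then f b * (f (a-i) * g i) else 0)
        = if j = 0 then ∑ i ∈ Finset.range (a+1), f b * (f (a-i) * g i) else 0 := by
      intro j _
      split_ifs <;> simp
    rw [Finset.sum_congr rfl h1, Finset.sum_ite_eq' (Finset.range (b+1)) 0]
    rw [if_pos (by simp), ← Finset.mul_sum, ← hconv' a (by omega)]
  rw [hT1, hT2, hT3]
  by_cases ha : a = 0 <;> by_cases hb : b = 0 <;> simp [ha, hb] <;> ring

end Conv

section Glue

/-- The middle matrix `B = diag(l) ⊕ S_p^+` as a function on naturals. -/
def Bfun (l : ℝ) (s : ℕ → ℝ) (i j : ℕ) : ℝ :=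
  if i = 0 ∧ j = 0 then l else if i = 0 ∨ j = 0 then 0 else s (i + j - 1)

lemma Bfun_symm (l : ℝ) (s : ℕ → ℝ) (i j : ℕ) : Bfun l s i j = Bfun l s j i := by
  by_cases h1 : i = 0 <;> by_cases h2 : j = 0 <;>
    simp [Bfun, h1, h2, Nat.add_comm j i]

lemma Bfun_eq (l : ℝ) (s : ℕ → ℝ) (i j : ℕ) :
    Bfun l s i j
      = -((fun k => if k = 0 then l else -s (k-1)) (i+j))
        + (if i = 0 then (fun k => if k = 0 then l else -s (k-1)) j else 0)
        + (if j = 0 then (fun k => if k = 0 then l else -s (k-1)) i else 0) := by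
  by_cases h1 : i = 0 <;> by_cases h2 : j = 0 <;>
    simp [Bfun, h1, h2] <;> ring

def blockEquiv (p : ℕ) : Fin 1 ⊕ Fin p ≃ Fin (p+1) :=
  finSumFinEquiv.trans (finCongr (by omega))

lemma blockEquiv_val (p : ℕ) (x : Fin 1 ⊕ Fin p) :
    ((blockEquiv p x : Fin (p+1)) : ℕ)
      = Sum.elim (fun _ : Fin 1 => (0:ℕ)) (fun x1 : Fin p => (x1:ℕ)+1) x := by
  cases x with
  | inl x0 =>
    simp only [blockEquiv, Equiv.trans_apply, finSumFinEquiv_apply_left, finCongr_apply,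
      Fin.coe_cast, Fin.coe_castAdd, Sum.elim_inl]
    omega
  | inr x1 =>
    simp only [blockEquiv, Equiv.trans_apply, finSumFinEquiv_apply_right, finCongr_apply,
      Fin.coe_cast, Fin.coe_natAdd, Sum.elim_inr]
    omega

lemma fin_sum_ite (n a : ℕ) (ha : a < n) (h : ℕ → ℝ) :
    ∑ i : Fin n, (if (i : ℕ) ≤ a then h (i : ℕ) else 0)
      = ∑ k ∈ Finset.range (a+1), h k := by
  rw [Fin.sum_univ_eq_sum_range (fun k => if k ≤ a then h k else 0) n]
  have hsub : Finset.range (a+1) ⊆ Finset.range n := by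
    intro x hx
    simp only [Finset.mem_range] at *
    omega
  rw [← Finset.sum_subset hsub (fun x _ hnx => by
    rw [if_neg]
    simp only [Finset.mem_range] at hnx
    omega)]
  apply Finset.sum_congr rfl
  intro k hk
  simp only [Finset.mem_range, Nat.lt_succ_iff] at hk
  rw [if_pos hk]

end Glue

end IndexAux

/-- Corollary 3.6.  Here the sequence `𝔰_{-1}, 𝔰_0, …, 𝔰_ℓ` is encoded by `frak : ℕ → ℝ`
with `frak i = 𝔰_{i-1}`, of total length `L = ℓ + 2 ≥ 2`; `n = ⌊ℓ/2⌋ = (L-2)/2`, and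
`𝒮_{p+1}^- = (𝔰_{i+j-1})_{i,j=0}^{p} = hankelM frak (p+1)`.
`ν_−(S_p^+) = ν_−(𝒮_{p+1}^-) − 1` is stated additively. -/
theorem index_identities_splus_of_toeplitz
    (L : ℕ) (hL : 2 ≤ L) (frak : ℕ → ℝ) (h0 : frak 0 ≠ 0)
    (l : ℝ) (hl : l = (frak 0)⁻¹)
    (s : ℕ → ℝ)
    (hTop : toeplitzU (fun i : Fin L => frak (i : ℕ)) *
      toeplitzU (fun i : Fin L => if (i : ℕ) = 0 then l else -s ((i : ℕ) - 1)) = 1) :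
    ∀ p : ℕ, 1 ≤ p → p ≤ (L - 2) / 2 →
      nuZero (hankelMp s p) = nuZero (hankelM frak (p + 1)) ∧
      (0 < frak 0 → nuNeg (hankelMp s p) = nuNeg (hankelM frak (p + 1))) ∧
      (frak 0 < 0 → nuNeg (hankelMp s p) + 1 = nuNeg (hankelM frak (p + 1))) := by

  classical
  intro p hp1 hp2
  have hpL : 2 * p + 2 ≤ L := by omega
  set gg : ℕ → ℝ := fun k => if k = 0 then l else -s (k-1) with hgg
  -- convolution identity from the Toeplitz hypothesis
  have hconv : ∀ m, m ≤ 2*p →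
      ∑ k ∈ Finset.range (m+1), frak k * gg (m-k) = if m = 0 then 1 else 0 := by
    intro m hm
    have hmL : m < L := by omega
    have h0L : 0 < L := by omega
    have hentry := Matrix.ext_iff.mpr hTop ⟨0, h0L⟩ ⟨m, hmL⟩
    rw [Matrix.mul_apply] at hentry
    have hsummand : ∀ k : Fin L,
        toeplitzU (fun i : Fin L => frak (i : ℕ)) ⟨0, h0L⟩ k *
          toeplitzU (fun i : Fin L => if (i : ℕ) = 0 then l else -s ((i : ℕ) - 1)) k ⟨m, hmL⟩
        = if (k : ℕ) ≤ m then frak (k : ℕ) * gg (m - (k : ℕ)) else 0 := by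
      intro k
      show (if 0 ≤ (k:ℕ) then frak ((k:ℕ) - 0) else 0) *
        (if (k:ℕ) ≤ m then (if m - (k:ℕ) = 0 then l else -s (m - (k:ℕ) - 1)) else 0) = _
      rw [if_pos (Nat.zero_le _), Nat.sub_zero]
      by_cases h1 : (k:ℕ) ≤ m
      · by_cases h2 : m - (k:ℕ) = 0 <;> simp [h1, h2, hgg]
      · simp [h1]
    rw [Finset.sum_congr rfl (fun k _ => hsummand k),
      IndexAux.fin_sum_ite L m hmL (fun k => frak k * gg (m - k))] at hentry
    rw [hentry, Matrix.one_apply]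
    by_cases hm0 : m = 0 <;> simp [hm0, Fin.ext_iff] <;> omega
  set F := toeplitzU (fun i : Fin (p+1) => frak (i : ℕ)) with hF
  set Bm : Matrix (Fin (p+1)) (Fin (p+1)) ℝ :=
    Matrix.of (fun i j : Fin (p+1) => IndexAux.Bfun l s (i : ℕ) (j : ℕ)) with hBmdef
  -- the key congruence identity
  have hmain : hankelM frak (p+1) = Fᵀ * Bm * F := by
    ext a b
    have inner : ∀ j : Fin (p+1), (Fᵀ * Bm) a j
        = ∑ k ∈ Finset.range ((a:ℕ)+1), frak ((a:ℕ)-k) * IndexAux.Bfun l s k (j:ℕ) := by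
      intro j
      rw [Matrix.mul_apply]
      have hterm : ∀ i : Fin (p+1), Fᵀ a i * Bm i j
          = if (i:ℕ) ≤ (a:ℕ) then frak ((a:ℕ)-(i:ℕ)) * IndexAux.Bfun l s (i:ℕ) (j:ℕ) else 0 := by
        intro i
        rw [Matrix.transpose_apply]
        show (if (i:ℕ) ≤ (a:ℕ) then frak ((a:ℕ)-(i:ℕ)) else 0) * IndexAux.Bfun l s (i:ℕ) (j:ℕ) = _
        split_ifs <;> simp
      rw [Finset.sum_congr rfl (fun i _ => hterm i),
        IndexAux.fin_sum_ite (p+1) (a:ℕ) a.isLt (fun k => frak ((a:ℕ)-k) * IndexAux.Bfun l s k (j:ℕ))]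
    have houter : ∀ j : Fin (p+1), (Fᵀ * Bm) a j * F j b
        = if (j:ℕ) ≤ (b:ℕ) then
            (∑ k ∈ Finset.range ((a:ℕ)+1), frak ((a:ℕ)-k) * IndexAux.Bfun l s k (j:ℕ))
              * frak ((b:ℕ)-(j:ℕ)) else 0 := by
      intro j
      rw [inner j]
      show _ * (if (j:ℕ) ≤ (b:ℕ) then frak ((b:ℕ)-(j:ℕ)) else 0) = _
      split_ifs <;> simp
    show frak ((a:ℕ)+(b:ℕ)) = _
    rw [Matrix.mul_apply, Finset.sum_congr rfl (fun j _ => houter j),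
      IndexAux.fin_sum_ite (p+1) (b:ℕ) b.isLt
        (fun m => (∑ k ∈ Finset.range ((a:ℕ)+1), frak ((a:ℕ)-k) * IndexAux.Bfun l s k m)
          * frak ((b:ℕ)-m))]
    symm
    have hrw : ∀ m ∈ Finset.range ((b:ℕ)+1),
        (∑ k ∈ Finset.range ((a:ℕ)+1), frak ((a:ℕ)-k) * IndexAux.Bfun l s k m) * frak ((b:ℕ)-m)
        = (∑ k ∈ Finset.range ((a:ℕ)+1), frak ((a:ℕ)-k) *
            (-(gg (k+m)) + (if k = 0 then gg m else 0) + (if m = 0 then gg k else 0)))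
              * frak ((b:ℕ)-m) := by
      intro m _
      congr 1
      apply Finset.sum_congr rfl
      intro k _
      rw [IndexAux.Bfun_eq]
    rw [Finset.sum_congr rfl hrw]
    exact IndexAux.star_identity (2*p) hconv (a:ℕ) (b:ℕ) (by omega)
  -- F is invertible
  have hdetF : IsUnit F.det := by
    have htri : F.BlockTriangular id := by
      intro i j hij
      show (if (i:ℕ) ≤ (j:ℕ) then _ else 0) = 0
      rw [if_neg (by exact Nat.not_le.mpr hij)]
    rw [Matrix.det_of_upperTriangular htri]
    have hdiag : ∀ i : Fin (p+1), F i i = frak 0 := by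
      intro i
      show (if (i:ℕ) ≤ (i:ℕ) then frak ((i:ℕ)-(i:ℕ)) else 0) = frak 0
      rw [if_pos le_rfl, Nat.sub_self]
    rw [Finset.prod_congr rfl (fun i _ => hdiag i), Finset.prod_const]
    exact isUnit_iff_ne_zero.mpr (pow_ne_zero _ h0)
  -- Bm is symmetric
  have hBherm : Bm.IsHermitian := by
    unfold Matrix.IsHermitian
    rw [IndexAux.conjT_eq_transpose]
    ext i j
    exact IndexAux.Bfun_symm l s (j:ℕ) (i:ℕ)
  -- charpoly of Bm
  have hcharB : Bm.charpoly = (X - C l) * (hankelMp s p).charpoly := by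
    set e : Fin 1 ⊕ Fin p ≃ Fin (p+1) := IndexAux.blockEquiv p with he
    have hsub : Bm.submatrix e e
        = Matrix.fromBlocks (Matrix.of fun _ _ : Fin 1 => l) 0 0 (hankelMp s p) := by
      ext i j
      have hval : ∀ x : Fin 1 ⊕ Fin p, ((e x : Fin (p+1)) : ℕ)
          = Sum.elim (fun _ : Fin 1 => (0:ℕ)) (fun x1 : Fin p => (x1:ℕ)+1) x := by
        intro x
        rw [he]
        exact IndexAux.blockEquiv_val p x
      cases i with
      | inl i0 =>
        cases j with
        | inl j0 =>
          show IndexAux.Bfun l s _ _ = l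
          rw [hval (Sum.inl i0), hval (Sum.inl j0)]
          simp [IndexAux.Bfun]
        | inr j1 =>
          show IndexAux.Bfun l s _ _ = 0
          rw [hval (Sum.inl i0), hval (Sum.inr j1)]
          simp [IndexAux.Bfun]
      | inr i1 =>
        cases j with
        | inl j0 =>
          show IndexAux.Bfun l s _ _ = 0
          rw [hval (Sum.inr i1), hval (Sum.inl j0)]
          simp [IndexAux.Bfun]
        | inr j1 =>
          show IndexAux.Bfun l s _ _ = s ((i1:ℕ) + (j1:ℕ) + 1)
          rw [hval (Sum.inr i1), hval (Sum.inr j1)]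
          have h1 : ¬ ((i1:ℕ)+1 = 0 ∧ (j1:ℕ)+1 = 0) := by omega
          have h2 : ¬ ((i1:ℕ)+1 = 0 ∨ (j1:ℕ)+1 = 0) := by omega
          simp only [Sum.elim_inl, Sum.elim_inr, IndexAux.Bfun, if_neg h1, if_neg h2]
          have harith : (i1:ℕ)+1 + ((j1:ℕ)+1) - 1 = (i1:ℕ) + (j1:ℕ) + 1 := by omega
          rw [harith]
          exact (if_neg h1).trans (if_neg h2)
    have hre : Bm.submatrix e e = Matrix.reindex e.symm e.symm Bm := by
      rw [Matrix.reindex_apply, Equiv.symm_symm]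
    have hcp : Bm.charpoly = (Bm.submatrix e e).charpoly := by
      rw [hre, Matrix.charpoly_reindex]
    rw [hcp, hsub, Matrix.charpoly_fromBlocks_zero₁₂]
    congr 1
    rw [Matrix.charpoly, Matrix.det_fin_one]
    simp
  have hl0 : l ≠ 0 := by
    rw [hl]
    exact inv_ne_zero h0
  have hroots : Bm.charpoly.roots = l ::ₘ (hankelMp s p).charpoly.roots := by
    have hne : (X - C l) * (hankelMp s p).charpoly ≠ 0 :=
      mul_ne_zero (X_sub_C_ne_zero l) (Matrix.charpoly_monic _).ne_zero
    rw [hcharB, Polynomial.roots_mul hne, Polynomial.roots_X_sub_C]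
    rfl
  have hnuNegH : nuNeg (hankelM frak (p+1)) = nuNeg Bm := by
    rw [hmain]
    exact IndexAux.nuNeg_conj Bm F hBherm hdetF
  have hnuZeroH : nuZero (hankelM frak (p+1)) = nuZero Bm := by
    rw [hmain]
    exact IndexAux.nuZero_conj Bm F hBherm hdetF
  have hnuNegB : nuNeg Bm = (if l < 0 then 1 else 0) + nuNeg (hankelMp s p) := by
    rw [nuNeg, hroots, Multiset.filter_cons, Multiset.card_add]
    congr 1
    split_ifs <;> simp
  have hnuZeroB : nuZero Bm = nuZero (hankelMp s p) := by
    rw [nuZero, hroots, Multiset.filter_cons]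
    simp only [hl0, if_false]
    rw [zero_add]
    rfl
  refine ⟨?_, ?_, ?_⟩
  · rw [hnuZeroH, hnuZeroB]
  · intro hpos
    have hnl : ¬ l < 0 := by
      rw [hl]
      exact not_lt.mpr (le_of_lt (inv_pos.mpr hpos))
    rw [hnuNegH, hnuNegB, if_neg hnl, zero_add]
  · intro hneg
    have hnl : l < 0 := by
      rw [hl]
      exact inv_lt_zero.mpr hneg
    rw [hnuNegH, hnuNegB, if_pos hnl]
    omega


end
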